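/- Every sequence f : ℕ → ℂ satisfying f(n) = Γ(n·√2)/Γ(n·√3) for all n ≥ 1, where Γ is the Gamma function evaluated at positive real arguments, is not holonomic. -/

import Mathlib

open Real Polynomial


lemma gautschi_upper {a x : ℝ} (ha0 : 0 ≤ a) (ha1 : a ≤ 1) (hx : 1 ≤ x) :
    Real.Gamma (x + a) ≤ Real.Gamma x * x ^ a := by
  have hx0 : (0:ℝ) < x := lt_of_lt_of_le one_pos hx
  have hG := Real.convexOn_log_Gamma
  have h := hG.2 (Set.mem_Ioi.2 hx0) (Set.mem_Ioi.2 (by linarith : (0:ℝ) < x + 1))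
    (by linarith : (0:ℝ) ≤ 1 - a) ha0 (by ring)
  simp only [smul_eq_mul, Function.comp_apply] at h
  have hxa : (1 - a) * x + a * (x + 1) = x + a := by ring
  rw [hxa] at h
  have hG1 : Real.Gamma (x + 1) = x * Real.Gamma x := Real.Gamma_add_one (ne_of_gt hx0)
  have hGpos : 0 < Real.Gamma x := Real.Gamma_pos_of_pos hx0
  have hGpos' : 0 < Real.Gamma (x + a) := Real.Gamma_pos_of_pos (by linarith)
  have h2 : Real.log (Real.Gamma (x+a)) ≤ Real.log (Real.Gamma x) + Real.log x * a := by
    rw [hG1, Real.log_mul (ne_of_gt hx0) (ne_of_gt hGpos)] at h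
    nlinarith [h]
  calc Real.Gamma (x+a) = Real.exp (Real.log (Real.Gamma (x+a))) := (Real.exp_log hGpos').symm
    _ ≤ Real.exp (Real.log (Real.Gamma x) + Real.log x * a) := Real.exp_le_exp.2 h2
    _ = Real.Gamma x * x ^ a := by
        rw [Real.exp_add, Real.exp_log hGpos, Real.rpow_def_of_pos hx0]

lemma gautschi_lower {a x : ℝ} (ha0 : 0 ≤ a) (ha1 : a ≤ 1) (hx : 1 ≤ x) :
    Real.Gamma x * x ^ a / (1 + a) ≤ Real.Gamma (x + a) := by
  have hx0 : (0:ℝ) < x := lt_of_lt_of_le one_pos hx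
  have hG := Real.convexOn_log_Gamma
  have h := hG.2 (Set.mem_Ioi.2 (by linarith : (0:ℝ) < x + a))
    (Set.mem_Ioi.2 (by linarith : (0:ℝ) < x + a + 1)) ha0 (by linarith : (0:ℝ) ≤ 1 - a)
    (by ring)
  simp only [smul_eq_mul, Function.comp_apply] at h
  have hxa : a * (x + a) + (1 - a) * (x + a + 1) = x + 1 := by ring
  rw [hxa] at h
  have hGpos : 0 < Real.Gamma x := Real.Gamma_pos_of_pos hx0
  have hGa : 0 < Real.Gamma (x + a) := Real.Gamma_pos_of_pos (by linarith)
  have hxa0 : (0:ℝ) < x + a := by linarith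
  have hG1 : Real.Gamma (x + 1) = x * Real.Gamma x := Real.Gamma_add_one (ne_of_gt hx0)
  have hG2 : Real.Gamma (x + a + 1) = (x + a) * Real.Gamma (x + a) :=
    Real.Gamma_add_one (by positivity)
  rw [hG1, hG2, Real.log_mul (ne_of_gt hx0) (ne_of_gt hGpos),
    Real.log_mul (ne_of_gt hxa0) (ne_of_gt hGa)] at h
  have h2 : Real.log x + Real.log (Real.Gamma x) ≤
      Real.log (Real.Gamma (x + a)) + Real.log (x + a) * (1 - a) := by nlinarith [h]
  have h3 : x * Real.Gamma x ≤ Real.Gamma (x + a) * (x + a) ^ (1 - a) := by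
    have := Real.exp_le_exp.2 h2
    rwa [Real.exp_add, Real.exp_add, Real.exp_log hx0, Real.exp_log hGpos,
      Real.exp_log hGa, ← Real.rpow_def_of_pos hxa0] at this
  have key : x ^ a * (x + a) ^ (1 - a) ≤ x * (1 + a) := by
    have h4 : (x + a) ^ (1 - a) ≤ (x * (1 + a)) ^ (1 - a) := by
      apply Real.rpow_le_rpow (le_of_lt hxa0) _ (by linarith)
      nlinarith
    have h5 : x ^ a * (x * (1+a)) ^ (1 - a) = x * (1 + a) ^ (1 - a) := by
      rw [Real.mul_rpow (le_of_lt hx0) (by linarith), ← mul_assoc,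
        ← Real.rpow_add hx0]
      norm_num
    have h6 : (1 + a) ^ (1 - a) ≤ 1 + a := by
      calc (1 + a) ^ (1 - a) ≤ (1 + a) ^ (1:ℝ) :=
            Real.rpow_le_rpow_of_exponent_le (by linarith) (by linarith)
        _ = 1 + a := Real.rpow_one _
    calc x ^ a * (x + a) ^ (1 - a) ≤ x ^ a * (x * (1+a)) ^ (1-a) := by
          apply mul_le_mul_of_nonneg_left h4 (Real.rpow_nonneg (le_of_lt hx0) a)
      _ = x * (1 + a) ^ (1 - a) := h5
      _ ≤ x * (1 + a) := mul_le_mul_of_nonneg_left h6 (le_of_lt hx0)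
  -- combine: Γ x * x^a / (1+a) ≤ x Γ x / (x+a)^(1-a) ≤ Γ(x+a)
  rw [div_le_iff₀ (by linarith : (0:ℝ) < 1 + a)]
  have hpow : (0:ℝ) < (x + a) ^ (1 - a) := Real.rpow_pos_of_pos hxa0 _
  have hxapos : (0:ℝ) < x ^ a := Real.rpow_pos_of_pos hx0 a
  nlinarith [mul_le_mul_of_nonneg_left key hGa.le,
    mul_le_mul_of_nonneg_left h3 hxapos.le, hxapos, hGa, hx0]

lemma gamma_shift_aux (n : ℕ) : ∀ a : ℝ, 0 ≤ a → a ≤ n + 1 →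
    ∃ c C : ℝ, 0 < c ∧ 0 < C ∧ ∀ x : ℝ, 1 ≤ x →
      c * (x ^ a * Real.Gamma x) ≤ Real.Gamma (x + a) ∧
      Real.Gamma (x + a) ≤ C * (x ^ a * Real.Gamma x) := by
  induction n with
  | zero =>
    intro a ha0 ha1
    push_cast at ha1
    refine ⟨1 / (1 + a), 1, by positivity, one_pos, fun x hx => ?_⟩
    have h1 := gautschi_lower ha0 (by linarith) hx
    have h2 := gautschi_upper ha0 (by linarith) hx
    constructor
    · calc (1/(1+a)) * (x ^ a * Real.Gamma x) = Real.Gamma x * x ^ a / (1 + a) := by ring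
        _ ≤ _ := h1
    · calc Real.Gamma (x + a) ≤ Real.Gamma x * x ^ a := h2
        _ = 1 * (x ^ a * Real.Gamma x) := by ring
  | succ n ih =>
    intro a ha0 ha1
    rcases le_or_gt a (n + 1) with h | h
    · exact ih a ha0 h
    have ha1' : (1:ℝ) ≤ a := by
      have hn : (0:ℝ) ≤ (n:ℝ) := Nat.cast_nonneg n
      have : (1:ℝ) ≤ (n:ℝ) + 1 := by linarith
      linarith
    obtain ⟨c, C, hc, hC, hb⟩ := ih (a - 1) (by linarith) (by push_cast at ha1 ⊢; linarith)
    refine ⟨c, C * a, hc, by positivity, fun x hx => ?_⟩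
    have hx0 : (0:ℝ) < x := by linarith
    obtain ⟨hlow, hup⟩ := hb x hx
    have hsplit : Real.Gamma (x + a) = (x + (a - 1)) * Real.Gamma (x + (a - 1)) := by
      have : x + a = (x + (a - 1)) + 1 := by ring
      rw [this, Real.Gamma_add_one (ne_of_gt (by linarith : (0:ℝ) < x + (a - 1)))]
    have hxa : x ^ a = x ^ (a - 1) * x := by
      rw [← Real.rpow_add_one (ne_of_gt hx0)]; ring_nf
    have hfac1 : x ≤ x + (a - 1) := by linarith
    have hfac2 : x + (a - 1) ≤ a * x := by nlinarith
    have hGpos : 0 < Real.Gamma (x + (a - 1)) := Real.Gamma_pos_of_pos (by linarith)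
    constructor
    · rw [hsplit, hxa]
      calc c * (x ^ (a-1) * x * Real.Gamma x) = x * (c * (x ^ (a-1) * Real.Gamma x)) := by ring
        _ ≤ x * Real.Gamma (x + (a - 1)) := by
            exact mul_le_mul_of_nonneg_left hlow hx0.le
        _ ≤ (x + (a - 1)) * Real.Gamma (x + (a - 1)) := by
            exact mul_le_mul_of_nonneg_right hfac1 hGpos.le
    · rw [hsplit, hxa]
      calc (x + (a - 1)) * Real.Gamma (x + (a - 1)) ≤ (a * x) * Real.Gamma (x + (a-1)) :=
            mul_le_mul_of_nonneg_right hfac2 hGpos.le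
        _ ≤ (a * x) * (C * (x ^ (a-1) * Real.Gamma x)) := by
            apply mul_le_mul_of_nonneg_left hup (by positivity)
        _ = C * a * (x ^ (a-1) * x * Real.Gamma x) := by ring

lemma gamma_shift_bounds (a : ℝ) (ha : 0 ≤ a) :
    ∃ c C : ℝ, 0 < c ∧ 0 < C ∧ ∀ x : ℝ, 1 ≤ x →
      c * (x ^ a * Real.Gamma x) ≤ Real.Gamma (x + a) ∧
      Real.Gamma (x + a) ≤ C * (x ^ a * Real.Gamma x) := by
  refine gamma_shift_aux ⌈a⌉₊ a ha ?_
  calc a ≤ ⌈a⌉₊ := Nat.le_ceil a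
    _ ≤ (⌈a⌉₊:ℝ) + 1 := by linarith

noncomputable def gseq (n : ℕ) : ℝ := Real.Gamma (n * Real.sqrt 2) / Real.Gamma (n * Real.sqrt 3)

lemma gseq_pos {n : ℕ} (hn : 1 ≤ n) : 0 < gseq n := by
  have hn0 : (0:ℝ) < n := by exact_mod_cast Nat.lt_of_lt_of_le Nat.zero_lt_one hn
  have h2 : (0:ℝ) < Real.sqrt 2 := Real.sqrt_pos.2 (by norm_num)
  have h3 : (0:ℝ) < Real.sqrt 3 := Real.sqrt_pos.2 (by norm_num)
  exact div_pos (Real.Gamma_pos_of_pos (by positivity)) (Real.Gamma_pos_of_pos (by positivity))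

lemma gseq_ratio (k : ℕ) : ∃ c C : ℝ, 0 < c ∧ 0 < C ∧ ∀ n : ℕ, 1 ≤ n →
    c * ((n:ℝ) ^ ((Real.sqrt 2 - Real.sqrt 3) * k) * gseq n) ≤ gseq (n + k) ∧
    gseq (n + k) ≤ C * ((n:ℝ) ^ ((Real.sqrt 2 - Real.sqrt 3) * k) * gseq n) := by
  have s2pos : (0:ℝ) < Real.sqrt 2 := Real.sqrt_pos.2 (by norm_num)
  have s3pos : (0:ℝ) < Real.sqrt 3 := Real.sqrt_pos.2 (by norm_num)
  have s2ge1 : (1:ℝ) ≤ Real.sqrt 2 := by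
    rw [show (1:ℝ) = Real.sqrt 1 from (Real.sqrt_one).symm]
    exact Real.sqrt_le_sqrt (by norm_num)
  have s3ge1 : (1:ℝ) ≤ Real.sqrt 3 := by
    rw [show (1:ℝ) = Real.sqrt 1 from (Real.sqrt_one).symm]
    exact Real.sqrt_le_sqrt (by norm_num)
  obtain ⟨c2, C2, hc2, hC2, hb2⟩ := gamma_shift_bounds ((k:ℝ) * Real.sqrt 2) (by positivity)
  obtain ⟨c3, C3, hc3, hC3, hb3⟩ := gamma_shift_bounds ((k:ℝ) * Real.sqrt 3) (by positivity)
  set κ2 : ℝ := (Real.sqrt 2) ^ ((k:ℝ) * Real.sqrt 2) with hκ2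
  set κ3 : ℝ := (Real.sqrt 3) ^ ((k:ℝ) * Real.sqrt 3) with hκ3
  have hκ2pos : 0 < κ2 := Real.rpow_pos_of_pos s2pos _
  have hκ3pos : 0 < κ3 := Real.rpow_pos_of_pos s3pos _
  refine ⟨c2 * κ2 / (C3 * κ3), C2 * κ2 / (c3 * κ3), by positivity, by positivity, fun n hn => ?_⟩
  have hn0 : (0:ℝ) < n := by exact_mod_cast Nat.lt_of_lt_of_le Nat.zero_lt_one hn
  have hn1 : (1:ℝ) ≤ n := by exact_mod_cast hn
  have hx2 : (1:ℝ) ≤ (n:ℝ) * Real.sqrt 2 := by nlinarith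
  have hx3 : (1:ℝ) ≤ (n:ℝ) * Real.sqrt 3 := by nlinarith
  obtain ⟨h2lo, h2up⟩ := hb2 _ hx2
  obtain ⟨h3lo, h3up⟩ := hb3 _ hx3
  have hGn2 : 0 < Real.Gamma ((n:ℝ) * Real.sqrt 2) := Real.Gamma_pos_of_pos (by positivity)
  have hGn3 : 0 < Real.Gamma ((n:ℝ) * Real.sqrt 3) := Real.Gamma_pos_of_pos (by positivity)
  -- rewrite the shifted arguments
  have harg2 : ((n + k : ℕ) : ℝ) * Real.sqrt 2 = (n:ℝ) * Real.sqrt 2 + (k:ℝ) * Real.sqrt 2 := by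
    push_cast; ring
  have harg3 : ((n + k : ℕ) : ℝ) * Real.sqrt 3 = (n:ℝ) * Real.sqrt 3 + (k:ℝ) * Real.sqrt 3 := by
    push_cast; ring
  -- rewrite the powers
  have hpow2 : ((n:ℝ) * Real.sqrt 2) ^ ((k:ℝ) * Real.sqrt 2)
      = (n:ℝ) ^ ((k:ℝ) * Real.sqrt 2) * κ2 := Real.mul_rpow hn0.le s2pos.le
  have hpow3 : ((n:ℝ) * Real.sqrt 3) ^ ((k:ℝ) * Real.sqrt 3)
      = (n:ℝ) ^ ((k:ℝ) * Real.sqrt 3) * κ3 := Real.mul_rpow hn0.le s3pos.le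
  rw [hpow2] at h2lo h2up
  rw [hpow3] at h3lo h3up
  have hexp : (n:ℝ) ^ ((Real.sqrt 2 - Real.sqrt 3) * (k:ℝ))
      = (n:ℝ) ^ ((k:ℝ) * Real.sqrt 2) / (n:ℝ) ^ ((k:ℝ) * Real.sqrt 3) := by
    rw [show (Real.sqrt 2 - Real.sqrt 3) * (k:ℝ) = (k:ℝ) * Real.sqrt 2 - (k:ℝ) * Real.sqrt 3
      by ring, Real.rpow_sub hn0]
  have hnp2 : (0:ℝ) < (n:ℝ) ^ ((k:ℝ) * Real.sqrt 2) := Real.rpow_pos_of_pos hn0 _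
  have hnp3 : (0:ℝ) < (n:ℝ) ^ ((k:ℝ) * Real.sqrt 3) := Real.rpow_pos_of_pos hn0 _
  have hG2lo : 0 < c3 * ((n:ℝ) ^ ((k:ℝ) * Real.sqrt 3) * κ3 * Real.Gamma ((n:ℝ) * Real.sqrt 3)) :=
    by positivity
  constructor
  · -- lower bound
    unfold gseq
    rw [harg2, harg3, hexp]
    have key : (c2 * ((n:ℝ) ^ ((k:ℝ) * Real.sqrt 2) * κ2 * Real.Gamma ((n:ℝ) * Real.sqrt 2)))
        / (C3 * ((n:ℝ) ^ ((k:ℝ) * Real.sqrt 3) * κ3 * Real.Gamma ((n:ℝ) * Real.sqrt 3)))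
        ≤ Real.Gamma ((n:ℝ) * Real.sqrt 2 + (k:ℝ) * Real.sqrt 2)
          / Real.Gamma ((n:ℝ) * Real.sqrt 3 + (k:ℝ) * Real.sqrt 3) := by
      apply div_le_div₀ (Real.Gamma_pos_of_pos (by positivity : (0:ℝ) < (n:ℝ) * Real.sqrt 2
        + (k:ℝ) * Real.sqrt 2)).le h2lo (Real.Gamma_pos_of_pos (by positivity)) h3up
    refine le_trans (le_of_eq ?_) key
    field_simp
  · -- upper bound
    unfold gseq
    rw [harg2, harg3, hexp]
    have key : Real.Gamma ((n:ℝ) * Real.sqrt 2 + (k:ℝ) * Real.sqrt 2)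
          / Real.Gamma ((n:ℝ) * Real.sqrt 3 + (k:ℝ) * Real.sqrt 3)
        ≤ (C2 * ((n:ℝ) ^ ((k:ℝ) * Real.sqrt 2) * κ2 * Real.Gamma ((n:ℝ) * Real.sqrt 2)))
        / (c3 * ((n:ℝ) ^ ((k:ℝ) * Real.sqrt 3) * κ3 * Real.Gamma ((n:ℝ) * Real.sqrt 3))) := by
      apply div_le_div₀ (by positivity) h2up hG2lo h3lo
    refine le_trans key (le_of_eq ?_)
    field_simp

lemma poly_upper (p : Polynomial ℂ) : ∃ C : ℝ, 0 < C ∧ ∀ n : ℕ, 1 ≤ n →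
    ‖p.eval (n:ℂ)‖ ≤ C * (n:ℝ) ^ p.natDegree := by
  refine ⟨(∑ i ∈ Finset.range (p.natDegree + 1), ‖p.coeff i‖) + 1, by positivity, fun n hn => ?_⟩
  have hn1 : (1:ℝ) ≤ (n:ℝ) := by exact_mod_cast hn
  have hcast : ∀ i : ℕ, ‖p.coeff i * (n:ℂ) ^ i‖ = ‖p.coeff i‖ * (n:ℝ) ^ i := by
    intro i
    rw [norm_mul, norm_pow, Complex.norm_natCast]
  calc ‖p.eval (n:ℂ)‖ = ‖∑ i ∈ Finset.range (p.natDegree + 1), p.coeff i * (n:ℂ) ^ i‖ := by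
        rw [eval_eq_sum_range]
    _ ≤ ∑ i ∈ Finset.range (p.natDegree + 1), ‖p.coeff i * (n:ℂ) ^ i‖ := norm_sum_le _ _
    _ = ∑ i ∈ Finset.range (p.natDegree + 1), ‖p.coeff i‖ * (n:ℝ) ^ i := by
        exact Finset.sum_congr rfl fun i _ => hcast i
    _ ≤ ∑ i ∈ Finset.range (p.natDegree + 1), ‖p.coeff i‖ * (n:ℝ) ^ p.natDegree := by
        apply Finset.sum_le_sum
        intro i hi
        exact mul_le_mul_of_nonneg_left
          (pow_le_pow_right₀ hn1 (Nat.lt_succ_iff.1 (Finset.mem_range.1 hi))) (norm_nonneg _)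
    _ = (∑ i ∈ Finset.range (p.natDegree + 1), ‖p.coeff i‖) * (n:ℝ) ^ p.natDegree := by
        rw [Finset.sum_mul]
    _ ≤ ((∑ i ∈ Finset.range (p.natDegree + 1), ‖p.coeff i‖) + 1) * (n:ℝ) ^ p.natDegree := by
        apply mul_le_mul_of_nonneg_right (by linarith) (by positivity)

lemma poly_lower (p : Polynomial ℂ) (hp : p ≠ 0) : ∃ c : ℝ, 0 < c ∧ ∃ M : ℕ, 1 ≤ M ∧
    ∀ n : ℕ, M ≤ n → c * (n:ℝ) ^ p.natDegree ≤ ‖p.eval (n:ℂ)‖ := by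
  set D := p.natDegree with hD
  set L : ℝ := ‖p.leadingCoeff‖ with hL
  have hLpos : 0 < L := by
    simpa [hL] using (norm_pos_iff).2 (leadingCoeff_ne_zero.2 hp)
  set S : ℝ := ∑ i ∈ Finset.range D, ‖p.coeff i‖ with hS
  have hSnn : 0 ≤ S := Finset.sum_nonneg fun i _ => norm_nonneg _
  refine ⟨L / 2, by positivity, ⌈2 * S / L⌉₊ + 1, Nat.le_add_left 1 _, fun n hn => ?_⟩
  have hn1 : 1 ≤ n := le_trans (by omega) hn
  have hn1' : (1:ℝ) ≤ (n:ℝ) := by exact_mod_cast hn1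
  have hnS : 2 * S / L ≤ (n:ℝ) := by
    calc 2 * S / L ≤ (⌈2 * S / L⌉₊ : ℝ) := Nat.le_ceil _
      _ ≤ (n:ℝ) := by exact_mod_cast le_trans (by omega) hn
  have hSn : S ≤ L / 2 * (n:ℝ) := by
    rw [div_le_iff₀ hLpos] at hnS
    nlinarith
  have heval : p.eval (n:ℂ) = (∑ i ∈ Finset.range D, p.coeff i * (n:ℂ) ^ i)
      + p.leadingCoeff * (n:ℂ) ^ D := by
    rw [eval_eq_sum_range, Finset.sum_range_succ, Polynomial.leadingCoeff]
  have htail : ‖∑ i ∈ Finset.range D, p.coeff i * (n:ℂ) ^ i‖ ≤ S * (n:ℝ) ^ (D - 1) := by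
    calc ‖∑ i ∈ Finset.range D, p.coeff i * (n:ℂ) ^ i‖
        ≤ ∑ i ∈ Finset.range D, ‖p.coeff i * (n:ℂ) ^ i‖ := norm_sum_le _ _
      _ ≤ ∑ i ∈ Finset.range D, ‖p.coeff i‖ * (n:ℝ) ^ (D - 1) := by
          apply Finset.sum_le_sum
          intro i hi
          have hiD := Finset.mem_range.1 hi
          rw [norm_mul, norm_pow, Complex.norm_natCast]
          exact mul_le_mul_of_nonneg_left
            (pow_le_pow_right₀ hn1' (by omega : i ≤ D - 1)) (norm_nonneg _)
      _ = S * (n:ℝ) ^ (D - 1) := by rw [Finset.sum_mul]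
  have htail2 : S * (n:ℝ) ^ (D - 1) ≤ L / 2 * (n:ℝ) ^ D := by
    rcases Nat.eq_zero_or_pos D with h0 | h0
    · have hS0 : S = 0 := by rw [hS, h0]; simp
      rw [hS0, zero_mul]
      positivity
    · have : D = (D - 1) + 1 := by omega
      rw [this, pow_succ]
      calc S * (n:ℝ) ^ (D-1) ≤ (L / 2 * (n:ℝ)) * (n:ℝ) ^ (D-1) :=
            mul_le_mul_of_nonneg_right hSn (by positivity)
        _ = L / 2 * ((n:ℝ) ^ (D-1) * (n:ℝ)) := by ring
  have hlead : ‖p.leadingCoeff * (n:ℂ) ^ D‖ = L * (n:ℝ) ^ D := by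
    rw [norm_mul, norm_pow, Complex.norm_natCast]
  calc L / 2 * (n:ℝ) ^ D = L * (n:ℝ) ^ D - L / 2 * (n:ℝ) ^ D := by ring
    _ ≤ ‖p.leadingCoeff * (n:ℂ) ^ D‖ - ‖∑ i ∈ Finset.range D, p.coeff i * (n:ℂ) ^ i‖ := by
        rw [hlead]
        have := le_trans htail htail2
        linarith
    _ ≤ ‖p.eval (n:ℂ)‖ := by
        rw [heval]
        have := norm_sub_le (((∑ i ∈ Finset.range D, p.coeff i * (n:ℂ) ^ i))
          + p.leadingCoeff * (n:ℂ) ^ D) (∑ i ∈ Finset.range D, p.coeff i * (n:ℂ) ^ i)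
        simp only [add_sub_cancel_left] at this
        linarith

lemma irr_diff : Irrational (Real.sqrt 2 - Real.sqrt 3) := by
  have h6 : Irrational (Real.sqrt 6) := by
    rw [show (6:ℝ) = ((6:ℕ):ℝ) by norm_num]
    exact irrational_sqrt_natCast_iff.2 (by rintro ⟨m, hm⟩; rcases le_or_gt m 2 with h1 | h1 <;> nlinarith)
  rintro ⟨q, hq⟩
  apply h6
  refine ⟨(5 - q^2)/2, ?_⟩
  have h2 : Real.sqrt 2 ^ 2 = 2 := Real.sq_sqrt (by norm_num)
  have h3 : Real.sqrt 3 ^ 2 = 3 := Real.sq_sqrt (by norm_num)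
  have h23 : Real.sqrt 2 * Real.sqrt 3 = Real.sqrt 6 := by
    rw [← Real.sqrt_mul (by norm_num)]; norm_num
  have hq2 : (q:ℝ)^2 = 5 - 2 * Real.sqrt 6 := by
    rw [show ((q:ℝ))^2 = (Real.sqrt 2 - Real.sqrt 3)^2 by rw [hq], sub_sq, h2, h3]
    rw [mul_assoc, h23]; ring
  push_cast
  linarith


/-- A sequence `f : ℕ → ℂ` is *holonomic* (P-recursive) if there exist `d ∈ ℕ`,
polynomials `p_0, …, p_d ∈ ℂ[X]`, not all zero, and `N ∈ ℕ` such that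
`∑_{k=0}^d p_k(n) · f(n+k) = 0` for all `n ≥ N`. -/
def IsHolonomic (f : ℕ → ℂ) : Prop :=
  ∃ (d N : ℕ) (p : Fin (d + 1) → Polynomial ℂ),
    (∃ k, p k ≠ 0) ∧
    ∀ n : ℕ, N ≤ n → ∑ k : Fin (d + 1), (p k).eval (n : ℂ) * f (n + (k : ℕ)) = 0


/-- Every sequence `f : ℕ → ℂ` satisfying `f(n) = Γ(n√2)/Γ(n√3)` for all `n ≥ 1`
is not holonomic. -/
theorem gamma_ratio_not_holonomic
    (f : ℕ → ℂ)
    (hf : ∀ n : ℕ, 1 ≤ n →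
      f n = ((Real.Gamma ((n : ℝ) * Real.sqrt 2) / Real.Gamma ((n : ℝ) * Real.sqrt 3) : ℝ) : ℂ)) :
    ¬ IsHolonomic f := by
  rintro ⟨d, N, p, ⟨k0, hk0⟩, hrec⟩
  have hfg : ∀ n : ℕ, 1 ≤ n → f n = ((gseq n : ℝ) : ℂ) := fun n hn => hf n hn
  set e : Fin (d+1) → ℝ :=
    fun k => ((p k).natDegree : ℝ) + (Real.sqrt 2 - Real.sqrt 3) * ((k:ℕ):ℝ) with he
  set T : Finset (Fin (d+1)) := Finset.univ.filter (fun k => p k ≠ 0) with hT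
  have hTne : T.Nonempty := ⟨k0, by simp [hT, hk0]⟩
  obtain ⟨m, hmT, hmax⟩ := T.exists_max_image e hTne
  have hpm : p m ≠ 0 := by
    have := Finset.mem_filter.1 hmT
    exact this.2
  have hstrict : ∀ k, k ∈ T → k ≠ m → e k < e m := by
    intro k hk hne
    rcases lt_or_eq_of_le (hmax k hk) with h | h
    · exact h
    · exfalso
      have hkm : ((k:ℕ):ℝ) - ((m:ℕ):ℝ) ≠ 0 := by
        intro hcon
        apply hne
        have : ((k:ℕ):ℝ) = ((m:ℕ):ℝ) := by linarith
        have : (k:ℕ) = (m:ℕ) := by exact_mod_cast this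
        exact Fin.ext this
      have hlin : (Real.sqrt 2 - Real.sqrt 3) * (((k:ℕ):ℝ) - ((m:ℕ):ℝ))
          = ((p m).natDegree : ℝ) - ((p k).natDegree : ℝ) := by
        simp only [he] at h
        linarith [h]
      apply irr_diff
      refine ⟨(((p m).natDegree : ℚ) - ((p k).natDegree : ℚ)) / (((k:ℕ):ℚ) - ((m:ℕ):ℚ)), ?_⟩
      push_cast
      rw [div_eq_iff hkm]
      linarith [hlin]
  -- constants
  obtain ⟨cm, hcm, M0, hM0, hpmlow⟩ := poly_lower (p m) hpm
  choose Cp hCp hCpb using fun k : Fin (d+1) => poly_upper (p k)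
  choose cg Cg hcg hCg hgb using fun k : Fin (d+1) => gseq_ratio (k:ℕ)
  -- key estimate for large n
  set B : ℝ := ∑ k ∈ Finset.univ.erase m, Cp k * Cg k with hB
  have hBnn : 0 ≤ B := Finset.sum_nonneg fun k _ => le_of_lt (mul_pos (hCp k) (hCg k))
  -- choose the second-largest exponent (or a dummy)
  have hEbound : ∃ E : ℝ, E < e m ∧ ∀ k, k ∈ T → k ≠ m → e k ≤ E := by
    rcases (T.erase m).eq_empty_or_nonempty with hemp | hne'
    · exact ⟨e m - 1, by linarith, fun k hk hkne => absurd
        (Finset.mem_erase.2 ⟨hkne, hk⟩) (by simp [hemp])⟩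
    · obtain ⟨j, hjmem, hjmax⟩ := (T.erase m).exists_max_image e hne'
      have hjT := (Finset.mem_erase.1 hjmem).2
      have hjne := (Finset.mem_erase.1 hjmem).1
      exact ⟨e j, hstrict j hjT hjne, fun k hk hkne =>
        hjmax k (Finset.mem_erase.2 ⟨hkne, hk⟩)⟩
  obtain ⟨E, hElt, hEub⟩ := hEbound
  set M : ℕ := max M0 (max N 1) with hM
  have key : ∀ n : ℕ, M ≤ n →
      (cm * cg m) * (n:ℝ) ^ (e m) ≤ B * (n:ℝ) ^ E := by
    intro n hn
    have hn1 : 1 ≤ n := le_trans (le_trans (le_max_right N 1) (le_max_right M0 _)) hn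
    have hnN : N ≤ n := le_trans (le_trans (le_max_left N 1) (le_max_right M0 _)) hn
    have hnM0 : M0 ≤ n := le_trans (le_max_left M0 _) hn
    have hn1' : (1:ℝ) ≤ (n:ℝ) := by exact_mod_cast hn1
    have hn0' : (0:ℝ) < (n:ℝ) := by linarith
    have hgpos : 0 < gseq n := gseq_pos hn1
    -- power identity
    have hpow : ∀ k : Fin (d+1),
        (n:ℝ) ^ (p k).natDegree * (n:ℝ) ^ ((Real.sqrt 2 - Real.sqrt 3) * ((k:ℕ):ℝ))
        = (n:ℝ) ^ (e k) := by
      intro k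
      rw [he, ← Real.rpow_natCast (n:ℝ) ((p k).natDegree), ← Real.rpow_add hn0']
    -- the recurrence, isolated at m
    have hrec' := hrec n hnN
    have hsum : (p m).eval (n:ℂ) * f (n + (m:ℕ))
        = - ∑ k ∈ Finset.univ.erase m, (p k).eval (n:ℂ) * f (n + (k:ℕ)) := by
      have := Finset.sum_erase_add Finset.univ
        (fun k : Fin (d+1) => (p k).eval (n:ℂ) * f (n + (k:ℕ))) (Finset.mem_univ m)
      rw [hrec'] at this
      linear_combination this
    -- norms
    have hnorm_m : ‖(p m).eval (n:ℂ) * f (n + (m:ℕ))‖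
        = ‖(p m).eval (n:ℂ)‖ * gseq (n + (m:ℕ)) := by
      rw [norm_mul, hfg _ (by omega), Complex.norm_real,
        Real.norm_of_nonneg (le_of_lt (gseq_pos (by omega)))]
    have hlhs : (cm * (n:ℝ) ^ (p m).natDegree) *
        (cg m * ((n:ℝ) ^ ((Real.sqrt 2 - Real.sqrt 3) * ((m:ℕ):ℝ)) * gseq n))
        ≤ ‖(p m).eval (n:ℂ) * f (n + (m:ℕ))‖ := by
      rw [hnorm_m]
      apply mul_le_mul (hpmlow n hnM0) ((hgb m n hn1).1)
        (le_of_lt (mul_pos (hcg m) (mul_pos (Real.rpow_pos_of_pos hn0' _) hgpos)))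
        (le_trans (by positivity) (hpmlow n hnM0))
    have hrhs : ‖∑ k ∈ Finset.univ.erase m, (p k).eval (n:ℂ) * f (n + (k:ℕ))‖
        ≤ B * ((n:ℝ) ^ E * gseq n) := by
      calc ‖∑ k ∈ Finset.univ.erase m, (p k).eval (n:ℂ) * f (n + (k:ℕ))‖
          ≤ ∑ k ∈ Finset.univ.erase m, ‖(p k).eval (n:ℂ) * f (n + (k:ℕ))‖ := norm_sum_le _ _
        _ ≤ ∑ k ∈ Finset.univ.erase m, (Cp k * Cg k) * ((n:ℝ) ^ E * gseq n) := by
            apply Finset.sum_le_sum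
            intro k hk
            rcases eq_or_ne (p k) 0 with hk0' | hk0'
            · rw [hk0']
              simp only [Polynomial.eval_zero, zero_mul, norm_zero]
              exact mul_nonneg (mul_pos (hCp k) (hCg k)).le
                (mul_nonneg (Real.rpow_nonneg hn0'.le _) hgpos.le)
            · have hkT : k ∈ T := Finset.mem_filter.2 ⟨Finset.mem_univ k, hk0'⟩
              have hkne : k ≠ m := (Finset.mem_erase.1 hk).1
              have hek : e k ≤ E := hEub k hkT hkne
              have hnormk : ‖(p k).eval (n:ℂ) * f (n + (k:ℕ))‖
                  = ‖(p k).eval (n:ℂ)‖ * gseq (n + (k:ℕ)) := by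
                rw [norm_mul, hfg _ (by omega), Complex.norm_real,
                  Real.norm_of_nonneg (le_of_lt (gseq_pos (by omega)))]
              rw [hnormk]
              calc ‖(p k).eval (n:ℂ)‖ * gseq (n + (k:ℕ))
                  ≤ (Cp k * (n:ℝ) ^ (p k).natDegree) *
                    (Cg k * ((n:ℝ) ^ ((Real.sqrt 2 - Real.sqrt 3) * ((k:ℕ):ℝ)) * gseq n)) := by
                    apply mul_le_mul (hCpb k n hn1) ((hgb k n hn1).2)
                      (le_of_lt (gseq_pos (by omega)))
                      (le_of_lt (mul_pos (hCp k) (by positivity)))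
                _ = (Cp k * Cg k) * ((n:ℝ) ^ (e k) * gseq n) := by
                    rw [← hpow k]; ring
                _ ≤ (Cp k * Cg k) * ((n:ℝ) ^ E * gseq n) := by
                    apply mul_le_mul_of_nonneg_left _ (le_of_lt (mul_pos (hCp k) (hCg k)))
                    apply mul_le_mul_of_nonneg_right
                      (Real.rpow_le_rpow_of_exponent_le hn1' hek) hgpos.le
        _ = B * ((n:ℝ) ^ E * gseq n) := by rw [hB, Finset.sum_mul]
    have hmain : (cm * cg m) * ((n:ℝ) ^ (e m) * gseq n) ≤ B * ((n:ℝ) ^ E * gseq n) := by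
      calc (cm * cg m) * ((n:ℝ) ^ (e m) * gseq n)
          = (cm * (n:ℝ) ^ (p m).natDegree) *
            (cg m * ((n:ℝ) ^ ((Real.sqrt 2 - Real.sqrt 3) * ((m:ℕ):ℝ)) * gseq n)) := by
            rw [← hpow m]; ring
        _ ≤ ‖(p m).eval (n:ℂ) * f (n + (m:ℕ))‖ := hlhs
        _ = ‖∑ k ∈ Finset.univ.erase m, (p k).eval (n:ℂ) * f (n + (k:ℕ))‖ := by
            rw [hsum, norm_neg]
        _ ≤ B * ((n:ℝ) ^ E * gseq n) := hrhs
    have := mul_le_mul_of_nonneg_right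
      (le_of_eq (rfl : (cm * cg m) * ((n:ℝ) ^ (e m) * gseq n) = _)) (le_refl (0:ℝ))
    nlinarith [hmain, hgpos, Real.rpow_pos_of_pos hn0' (e m), Real.rpow_pos_of_pos hn0' E]
  -- derive the contradiction
  have hcc : 0 < cm * cg m := mul_pos hcm (hcg m)
  have htend : Filter.Tendsto (fun n : ℕ => (n:ℝ) ^ (e m - E)) Filter.atTop Filter.atTop :=
    (tendsto_rpow_atTop (by linarith : 0 < e m - E)).comp
      tendsto_natCast_atTop_atTop
  have hev : ∀ᶠ n : ℕ in Filter.atTop,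
      B / (cm * cg m) < (n:ℝ) ^ (e m - E) ∧ M ≤ n ∧ 1 ≤ n :=
    ((htend.eventually (Filter.eventually_gt_atTop _)).and
      ((Filter.eventually_ge_atTop M).and (Filter.eventually_ge_atTop 1)))
  obtain ⟨n, hgt, hnM, hn1⟩ := hev.exists
  have hn0' : (0:ℝ) < (n:ℝ) := by exact_mod_cast Nat.lt_of_lt_of_le Nat.zero_lt_one hn1
  have hkey := key n hnM
  have hsplit : (n:ℝ) ^ (e m) = (n:ℝ) ^ E * (n:ℝ) ^ (e m - E) := by
    rw [← Real.rpow_add hn0']; ring_nf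
  rw [hsplit] at hkey
  have hEpos : (0:ℝ) < (n:ℝ) ^ E := Real.rpow_pos_of_pos hn0' _
  have hgt' : B < (cm * cg m) * (n:ℝ) ^ (e m - E) := by
    rw [div_lt_iff₀ hcc] at hgt
    linarith [hgt]
  nlinarith [hkey, hEpos, mul_lt_mul_of_pos_right hgt' hEpos]
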